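/- For all real numbers a ≥ b ≥ 0 and any ν ∈ (0,1], one has (a − b)^ν ≤ 2^{1−ν}·a^ν − b^ν. -/

import Mathlib

open NNReal in
lemma aux_concave_two (x y : ℝ≥0) {ν : ℝ} (hν0 : 0 < ν) (hν1 : ν ≤ 1) :
    x ^ ν + y ^ ν ≤ 2 ^ (1 - ν) * (x + y) ^ ν := by
  have hp : 1 ≤ 1 / ν := one_le_one_div hν0 hν1
  have h := NNReal.rpow_add_le_mul_rpow_add_rpow (x ^ ν) (y ^ ν) hp
  have hx : (x ^ ν) ^ (1 / ν) = x := by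
    rw [← NNReal.rpow_mul, mul_one_div_cancel hν0.ne', NNReal.rpow_one]
  have hy : (y ^ ν) ^ (1 / ν) = y := by
    rw [← NNReal.rpow_mul, mul_one_div_cancel hν0.ne', NNReal.rpow_one]
  rw [hx, hy] at h
  have h2 := NNReal.rpow_le_rpow h hν0.le
  rw [← NNReal.rpow_mul, one_div, inv_mul_cancel₀ hν0.ne', NNReal.rpow_one,
    NNReal.mul_rpow, ← NNReal.rpow_mul] at h2
  have : (ν⁻¹ - 1) * ν = 1 - ν := by field_simp
  rwa [this] at h2

theorem rpow_sub_le (a b ν : ℝ) (hb : 0 ≤ b) (hab : b ≤ a)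
    (hν0 : 0 < ν) (hν1 : ν ≤ 1) :
    (a - b) ^ ν ≤ 2 ^ (1 - ν) * a ^ ν - b ^ ν := by
  rw [le_sub_iff_add_le]
  have key := aux_concave_two (⟨a - b, by linarith⟩ : NNReal) (⟨b, hb⟩ : NNReal) hν0 hν1
  have hsum : (⟨a - b, by linarith⟩ + ⟨b, hb⟩ : NNReal) = ⟨a, by linarith⟩ := by
    ext; show (a - b) + b = a; ring
  rw [hsum] at key
  have := (NNReal.coe_le_coe).mpr key
  push_cast [NNReal.coe_rpow, NNReal.coe_mul] at this
  convert this using 3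
  all_goals rfl
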